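/- Let d ∈ {2,3} and s ∈ [0, 1/2]. There exists a constant C > 0, depending only on d and s, such that for all k, t > 0 with kt ≥ 1 and all measurable functions F, G : ℝ^d → [0, ∞), ∫_{{ξ : ‖ξ⁻‖ < kt/2 and |ξ_d| < kt/2}} (1 + ‖ξ‖²)^s · ((‖ξ⁻‖ + kt)² + ξ_d²)^{−1/2} · F(ξ) G(ξ) dξ ≤ C (kt)^{2s−1} ‖F‖_{L²(ℝ^d)} ‖G‖_{L²(ℝ^d)}. -/

import Mathlib

open MeasureTheory
open scoped ENNReal

/-- `‖ξ⁻‖`, the Euclidean norm of the first `d − 1` coordinates of `ξ ∈ ℝ^d`. -/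
noncomputable def xiMinusNorm {d : ℕ} (ξ : EuclideanSpace ℝ (Fin d)) : ℝ :=
  Real.sqrt (∑ i ∈ Finset.univ.filter (fun i : Fin d => (i : ℕ) < d - 1), ξ i ^ 2)

/-- `ξ_d`, the last coordinate of `ξ ∈ ℝ^d`. -/
noncomputable def xiLast {d : ℕ} (hd : 0 < d) (ξ : EuclideanSpace ℝ (Fin d)) : ℝ :=
  ξ ⟨d - 1, Nat.sub_lt hd one_pos⟩

lemma norm_sq_split {d : ℕ} (hd : 0 < d) (ξ : EuclideanSpace ℝ (Fin d)) :
    ‖ξ‖ ^ 2 = xiMinusNorm ξ ^ 2 + xiLast hd ξ ^ 2 := by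
  have h1 : ‖ξ‖ ^ 2 = ∑ i, ξ i ^ 2 := by
    rw [EuclideanSpace.norm_eq, Real.sq_sqrt (Finset.sum_nonneg fun i _ => sq_nonneg _)]
    simp [Real.norm_eq_abs, sq_abs]
  have h2 : xiMinusNorm ξ ^ 2 = ∑ i ∈ Finset.univ.filter (fun i : Fin d => (i : ℕ) < d - 1), ξ i ^ 2 :=
    Real.sq_sqrt (Finset.sum_nonneg fun i _ => sq_nonneg _)
  rw [h1, h2, ← Finset.sum_filter_add_sum_filter_not Finset.univ (fun i : Fin d => (i : ℕ) < d - 1)]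
  congr 1
  have : Finset.univ.filter (fun i : Fin d => ¬ (i : ℕ) < d - 1) = {⟨d - 1, Nat.sub_lt hd one_pos⟩} := by
    ext i
    simp only [Finset.mem_filter, Finset.mem_univ, true_and, Finset.mem_singleton, Fin.ext_iff]
    have := i.isLt
    omega
  rw [this, Finset.sum_singleton]
  rfl

/-- Estimate of the term `I₂`, over the region `{‖ξ⁻‖ < kt/2, |ξ_d| < kt/2}` in the unique continuation
argument for the Helmholtz equation with a random potential. -/
theorem stmt_5 (d : ℕ) (hd : d = 2 ∨ d = 3) (s : ℝ) (hs : 0 ≤ s) (hs' : s ≤ 1 / 2) :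
    ∃ C > (0 : ℝ), ∀ k t : ℝ, 0 < k → 0 < t → 1 ≤ k * t →
      ∀ F G : EuclideanSpace ℝ (Fin d) → ℝ, Measurable F → Measurable G →
        (∀ ξ, 0 ≤ F ξ) → (∀ ξ, 0 ≤ G ξ) →
        (∫⁻ ξ in {ξ | xiMinusNorm ξ < k * t / 2 ∧ |xiLast (by omega) ξ| < k * t / 2},
            ENNReal.ofReal ((1 + ‖ξ‖ ^ 2) ^ s
              * ((xiMinusNorm ξ + k * t) ^ 2 + xiLast (by omega) ξ ^ 2) ^ (-(1 / 2) : ℝ)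
              * F ξ * G ξ)) ≤
          ENNReal.ofReal (C * (k * t) ^ (2 * s - 1))
            * (∫⁻ ξ, ENNReal.ofReal (F ξ ^ 2)) ^ (1 / 2 : ℝ)
            * (∫⁻ ξ, ENNReal.ofReal (G ξ ^ 2)) ^ (1 / 2 : ℝ) := by
  have hd0 : 0 < d := by omega
  refine ⟨2, two_pos, ?_⟩
  intro k t hk ht hkt F G hFm hGm hF0 hG0
  set K := k * t with hKdef
  have hK : 0 < K := mul_pos hk ht
  have hK1 : 1 ≤ K := hkt
  -- pointwise bound on the set
  have key : ∀ ξ ∈ {ξ : EuclideanSpace ℝ (Fin d) |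
      xiMinusNorm ξ < K / 2 ∧ |xiLast hd0 ξ| < K / 2},
      (1 + ‖ξ‖ ^ 2) ^ s * ((xiMinusNorm ξ + K) ^ 2 + xiLast hd0 ξ ^ 2) ^ (-(1 / 2) : ℝ)
        ≤ 2 * K ^ (2 * s - 1) := by
    rintro ξ ⟨h1, h2⟩
    set a := xiMinusNorm ξ with ha
    set b := xiLast hd0 ξ with hb
    have ha0 : 0 ≤ a := Real.sqrt_nonneg _
    have hnorm : ‖ξ‖ ^ 2 = a ^ 2 + b ^ 2 := norm_sq_split hd0 ξ
    have hfst : (1 + ‖ξ‖ ^ 2) ^ s ≤ 2 ^ s * K ^ (2 * s) := by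
      have hle : 1 + ‖ξ‖ ^ 2 ≤ 2 * K ^ 2 := by
        have hb2 : b ^ 2 ≤ (K / 2) ^ 2 := by
          rw [← sq_abs]; exact pow_le_pow_left₀ (abs_nonneg _) h2.le 2
        have ha2 : a ^ 2 ≤ (K / 2) ^ 2 := pow_le_pow_left₀ ha0 h1.le 2
        nlinarith [sq_nonneg K]
      calc (1 + ‖ξ‖ ^ 2) ^ s ≤ (2 * K ^ 2) ^ s := by
            apply Real.rpow_le_rpow (by positivity) hle hs
        _ = 2 ^ s * K ^ (2 * s) := by
            rw [Real.mul_rpow (by norm_num) (by positivity), ← Real.rpow_natCast K 2,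
              ← Real.rpow_mul hK.le]
            norm_num [mul_comm]
    have hsnd : ((a + K) ^ 2 + b ^ 2) ^ (-(1 / 2) : ℝ) ≤ K ^ (-1 : ℝ) := by
      have hle : K ^ 2 ≤ (a + K) ^ 2 + b ^ 2 := by nlinarith [sq_nonneg b]
      have : ((a + K) ^ 2 + b ^ 2) ^ (-(1 / 2) : ℝ) ≤ (K ^ 2) ^ (-(1 / 2) : ℝ) :=
        Real.rpow_le_rpow_of_nonpos (by positivity) hle (by norm_num)
      refine this.trans_eq ?_
      rw [← Real.rpow_natCast K 2, ← Real.rpow_mul hK.le]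
      norm_num
    calc (1 + ‖ξ‖ ^ 2) ^ s * ((a + K) ^ 2 + b ^ 2) ^ (-(1 / 2) : ℝ)
        ≤ (2 ^ s * K ^ (2 * s)) * K ^ (-1 : ℝ) := by
          apply mul_le_mul hfst hsnd (Real.rpow_nonneg (by positivity) _) (by positivity)
      _ = 2 ^ s * K ^ (2 * s - 1) := by
          rw [mul_assoc, ← Real.rpow_add hK]; ring_nf
      _ ≤ 2 * K ^ (2 * s - 1) := by
          have : (2 : ℝ) ^ s ≤ 2 ^ (1 : ℝ) :=
            Real.rpow_le_rpow_of_exponent_le one_le_two (by linarith)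
          simpa [Real.rpow_one] using
            mul_le_mul_of_nonneg_right this (Real.rpow_nonneg hK.le _)
  -- now the integral estimate
  calc (∫⁻ ξ in {ξ | xiMinusNorm ξ < K / 2 ∧ |xiLast hd0 ξ| < K / 2},
        ENNReal.ofReal ((1 + ‖ξ‖ ^ 2) ^ s
          * ((xiMinusNorm ξ + K) ^ 2 + xiLast hd0 ξ ^ 2) ^ (-(1 / 2) : ℝ) * F ξ * G ξ))
      ≤ ∫⁻ ξ in {ξ | xiMinusNorm ξ < K / 2 ∧ |xiLast hd0 ξ| < K / 2},
          ENNReal.ofReal (2 * K ^ (2 * s - 1)) * (ENNReal.ofReal (F ξ) * ENNReal.ofReal (G ξ)) := by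
        apply setLIntegral_mono
        · exact (measurable_const.mul ((ENNReal.measurable_ofReal.comp hFm).mul
            (ENNReal.measurable_ofReal.comp hGm)))
        · intro ξ hξ
          rw [← ENNReal.ofReal_mul (hF0 ξ), ← ENNReal.ofReal_mul (by positivity)]
          apply ENNReal.ofReal_le_ofReal
          calc (1 + ‖ξ‖ ^ 2) ^ s
                * ((xiMinusNorm ξ + K) ^ 2 + xiLast hd0 ξ ^ 2) ^ (-(1 / 2) : ℝ) * F ξ * G ξ
              = ((1 + ‖ξ‖ ^ 2) ^ s
                * ((xiMinusNorm ξ + K) ^ 2 + xiLast hd0 ξ ^ 2) ^ (-(1 / 2) : ℝ)) * (F ξ * G ξ) := by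
                ring
            _ ≤ 2 * K ^ (2 * s - 1) * (F ξ * G ξ) :=
                mul_le_mul_of_nonneg_right (key ξ hξ) (mul_nonneg (hF0 ξ) (hG0 ξ))
    _ ≤ ∫⁻ ξ, ENNReal.ofReal (2 * K ^ (2 * s - 1)) * (ENNReal.ofReal (F ξ) * ENNReal.ofReal (G ξ)) :=
        setLIntegral_le_lintegral _ _
    _ = ENNReal.ofReal (2 * K ^ (2 * s - 1)) * ∫⁻ ξ, ENNReal.ofReal (F ξ) * ENNReal.ofReal (G ξ) :=
        lintegral_const_mul _ ((ENNReal.measurable_ofReal.comp hFm).mul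
          (ENNReal.measurable_ofReal.comp hGm))
    _ ≤ ENNReal.ofReal (2 * K ^ (2 * s - 1)) *
          ((∫⁻ ξ, ENNReal.ofReal (F ξ) ^ (2 : ℝ)) ^ (1 / 2 : ℝ) *
           (∫⁻ ξ, ENNReal.ofReal (G ξ) ^ (2 : ℝ)) ^ (1 / 2 : ℝ)) := by
        gcongr
        have h22 : (2 : ℝ).HolderConjugate 2 := Real.holderConjugate_iff.mpr ⟨one_lt_two, by norm_num⟩
        have := ENNReal.lintegral_mul_le_Lp_mul_Lq volume h22
          (ENNReal.measurable_ofReal.comp hFm).aemeasurable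
          (ENNReal.measurable_ofReal.comp hGm).aemeasurable
        simpa [Function.comp] using this
    _ = ENNReal.ofReal (2 * K ^ (2 * s - 1))
          * (∫⁻ ξ, ENNReal.ofReal (F ξ ^ 2)) ^ (1 / 2 : ℝ)
          * (∫⁻ ξ, ENNReal.ofReal (G ξ ^ 2)) ^ (1 / 2 : ℝ) := by
        rw [mul_assoc]
        have hF2 : ∀ ξ, ENNReal.ofReal (F ξ) ^ (2 : ℝ) = ENNReal.ofReal (F ξ ^ 2) := fun ξ => by
          rw [show ((2:ℝ)) = ((2:ℕ):ℝ) by norm_num, ENNReal.rpow_natCast,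
            ← ENNReal.ofReal_pow (hF0 ξ)]
        have hG2 : ∀ ξ, ENNReal.ofReal (G ξ) ^ (2 : ℝ) = ENNReal.ofReal (G ξ ^ 2) := fun ξ => by
          rw [show ((2:ℝ)) = ((2:ℕ):ℝ) by norm_num, ENNReal.rpow_natCast,
            ← ENNReal.ofReal_pow (hG0 ξ)]
        simp only [hF2, hG2]
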